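/- Let d ≥ 2 and let ψ be an N-function with ∫_a^∞ (t/ψ(t))^{1/(d−1)} dt < ∞ for some a > 0. Then r·ψ⁻¹(r^{−d}) → 0 as r → 0⁺. -/

import Mathlib

open Filter MeasureTheory Set

/-- `ψ` is an N-function. -/
def IsNFunction (ψ : ℝ → ℝ) : Prop :=
  ConvexOn ℝ (Set.Ici 0) ψ ∧ MonotoneOn ψ (Set.Ici 0) ∧ ψ 0 = 0 ∧
  Filter.Tendsto (fun t => ψ t / t) (nhdsWithin 0 (Set.Ioi 0)) (nhds 0) ∧
  Filter.Tendsto (fun t => ψ t / t) Filter.atTop Filter.atTop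

theorem stmt6 (d : ℕ) (hd : 2 ≤ d) (ψ ψinv : ℝ → ℝ) (hN : IsNFunction ψ)
    (hinv : ∀ t ≥ (0:ℝ), 0 ≤ ψinv t ∧ ψinv (ψ t) = t ∧ ψ (ψinv t) = t)
    (a : ℝ) (ha : 0 < a)
    (hint : MeasureTheory.IntegrableOn
      (fun t => (t / ψ t) ^ ((1:ℝ) / ((d:ℝ) - 1))) (Set.Ici a)) :
    Filter.Tendsto (fun r : ℝ => r * ψinv (r ^ (-(d:ℝ))))
      (nhdsWithin 0 (Set.Ioi 0)) (nhds 0) := by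
  obtain ⟨hconv, hmono, hzero, -, htop⟩ := hN
  set q : ℝ := (d : ℝ) with hq
  have hq2 : (2:ℝ) ≤ q := by
    have : ((2:ℕ):ℝ) ≤ ((d:ℕ):ℝ) := Nat.cast_le.mpr hd
    simpa [hq] using this
  have hq1 : (1:ℝ) ≤ q - 1 := by linarith
  have hq1pos : (0:ℝ) < q - 1 := by linarith
  have hqpos : (0:ℝ) < q := by linarith
  set p : ℝ := (1:ℝ) / (q - 1) with hp
  have hppos : 0 < p := by positivity
  set f : ℝ → ℝ := fun t => (t / ψ t) ^ p with hf
  -- slope monotonicity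
  have slope : ∀ s t : ℝ, 0 < s → s ≤ t → ψ s / s ≤ ψ t / t := by
    intro s t hs hst
    have ht : 0 < t := lt_of_lt_of_le hs hst
    have h1 : ψ ((1 - s/t) • (0:ℝ) + (s/t) • t) ≤ (1 - s/t) • ψ 0 + (s/t) • ψ t :=
      hconv.2 (le_refl (0:ℝ)) (le_of_lt ht) (by
        have : s / t ≤ 1 := (div_le_one ht).mpr hst
        linarith) (by positivity) (by ring)
    have h2 : ψ s ≤ (s/t) * ψ t := by
      have : (1 - s/t) • (0:ℝ) + (s/t) • t = s := by
        field_simp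
        simp [ht.ne']
      rw [this, hzero] at h1
      simpa using h1
    rw [div_le_div_iff₀ hs ht]
    calc ψ s * t ≤ ((s/t) * ψ t) * t := by nlinarith
      _ = ψ t * s := by field_simp
  -- find b ≥ a, b ≥ 1 with ψ b ≥ b
  obtain ⟨b, hb1, hbm⟩ :=
    ((htop.eventually_ge_atTop 1).and (eventually_ge_atTop (max a 1))).exists
  have hba : a ≤ b := le_trans (le_max_left _ _) hbm
  have hb01 : (1:ℝ) ≤ b := le_trans (le_max_right _ _) hbm
  have hbpos : (0:ℝ) < b := by linarith
  have hψb : b ≤ ψ b := by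
    have := (one_le_div hbpos).mp hb1
    linarith
  have hψpos : ∀ t, b ≤ t → 0 < ψ t := by
    intro t ht
    have h1 : ψ b ≤ ψ t := hmono (le_of_lt hbpos) (by simp [mem_Ici]; linarith) ht
    linarith
  -- f is antitone and nonneg on [b, ∞)
  have hfnonneg : ∀ t, b ≤ t → 0 ≤ f t := by
    intro t ht
    have h1 := hψpos t ht
    have h2 : 0 < t := lt_of_lt_of_le hbpos ht
    show 0 ≤ (t / ψ t) ^ p
    positivity
  have hfanti : ∀ s t, b ≤ s → s ≤ t → f t ≤ f s := by
    intro s t hbs hst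
    have hs : 0 < s := lt_of_lt_of_le hbpos hbs
    have ht : 0 < t := lt_of_lt_of_le hs hst
    have hψs := hψpos s hbs
    have hψt := hψpos t (le_trans hbs hst)
    have hdiv : t / ψ t ≤ s / ψ s := by
      rw [div_le_div_iff₀ hψt hψs]
      have := slope s t hs hst
      rw [div_le_div_iff₀ hs ht] at this
      nlinarith
    exact Real.rpow_le_rpow (by positivity) hdiv (le_of_lt hppos)
  -- integrability
  have hIb : IntegrableOn f (Ici b) := hint.mono_set (Ici_subset_Ici.mpr hba)
  have hII : ∀ x y : ℝ, b ≤ x → b ≤ y → IntervalIntegrable f volume x y := by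
    intro x y hx hy
    refine (hIb.mono_set ?_).intervalIntegrable
    intro z hz
    rcases le_total x y with h | h
    · rw [uIcc_of_le h] at hz; exact le_trans hx hz.1
    · rw [uIcc_of_ge h] at hz; exact le_trans hy hz.1
  -- tail integrals tend to 0
  have hF : Tendsto (fun t => ∫ s in b..t, f s) atTop (nhds (∫ s in Ioi b, f s)) :=
    intervalIntegral_tendsto_integral_Ioi b (hIb.mono_set Ioi_subset_Ici_self) tendsto_id
  have hF2 : Tendsto (fun t => ∫ s in b..(2*t), f s) atTop (nhds (∫ s in Ioi b, f s)) :=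
    hF.comp (tendsto_id.const_mul_atTop two_pos)
  have hdiff : Tendsto (fun t => (∫ s in b..(2*t), f s) - ∫ s in b..t, f s)
      atTop (nhds 0) := by
    simpa using hF2.sub hF
  have g0 : Tendsto (fun t => t * f (2*t)) atTop (nhds 0) := by
    apply squeeze_zero' (g := fun t => (∫ s in b..(2*t), f s) - ∫ s in b..t, f s)
    · filter_upwards [eventually_ge_atTop b] with t ht
      have h2t : b ≤ 2*t := by linarith
      have := hfnonneg (2*t) h2t
      have hbt : 0 < t := lt_of_lt_of_le hbpos ht
      positivity
    · filter_upwards [eventually_ge_atTop b] with t ht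
      have htpos : 0 < t := lt_of_lt_of_le hbpos ht
      have ht2 : t ≤ 2*t := by linarith
      have h2t : b ≤ 2*t := by linarith
      rw [intervalIntegral.integral_interval_sub_left (hII b (2*t) le_rfl h2t)
        (hII b t le_rfl ht)]
      have hmon : (∫ s in t..2*t, (fun _ => f (2*t)) s) ≤ ∫ s in t..2*t, f s := by
        apply intervalIntegral.integral_mono_on ht2 intervalIntegrable_const
          (hII t (2*t) ht h2t)
        intro x hx
        exact hfanti x (2*t) (le_trans ht hx.1) hx.2
      rw [intervalIntegral.integral_const, smul_eq_mul] at hmon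
      calc t * f (2*t) = (2*t - t) * f (2*t) := by ring_nf
        _ ≤ ∫ s in t..2*t, f s := hmon
    · exact hdiff
  have hG : Tendsto (fun t => t * f t) atTop (nhds 0) := by
    have h2 : Tendsto (fun t : ℝ => 2 * ((t/2) * f (2*(t/2)))) atTop (nhds 0) := by
      have := (g0.comp (tendsto_id.atTop_div_const two_pos)).const_mul (2:ℝ)
      simpa using this
    have heq : (fun t : ℝ => t * f t) = fun t : ℝ => 2 * ((t/2) * f (2*(t/2))) := by
      funext t
      rw [show (2:ℝ)*(t/2) = t by ring]
      ring
    rw [heq]; exact h2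
  -- ψinv tends to atTop
  have hu : Tendsto ψinv atTop atTop := by
    rw [tendsto_atTop]
    intro M
    have hψM0 : 0 ≤ ψ (max M 0) := by
      have := hmono (le_refl (0:ℝ)) (le_max_right M 0) (le_max_right M 0)
      rw [hzero] at this; exact this
    filter_upwards [eventually_gt_atTop (ψ (max M 0))] with s hs
    by_contra h
    push_neg at h
    have hs0 : (0:ℝ) ≤ s := le_of_lt (lt_of_le_of_lt hψM0 hs)
    obtain ⟨hinv0, -, hinv2⟩ := hinv s hs0
    have : ψ (ψinv s) ≤ ψ (max M 0) :=
      hmono hinv0 (le_max_right M 0) (le_trans (le_of_lt h) (le_max_left M 0))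
    rw [hinv2] at this
    linarith
  have hrd : Tendsto (fun r : ℝ => r ^ (-q)) (nhdsWithin 0 (Ioi 0)) atTop := by
    apply Tendsto.congr' _ ((tendsto_rpow_atTop hqpos).comp tendsto_inv_nhdsGT_zero)
    filter_upwards [self_mem_nhdsWithin] with r hr
    have hr0 : (0:ℝ) < r := hr
    simp only [Function.comp]
    rw [Real.inv_rpow hr0.le, ← Real.rpow_neg hr0.le]
  have hutop : Tendsto (fun r : ℝ => ψinv (r ^ (-q))) (nhdsWithin 0 (Ioi 0)) atTop :=
    hu.comp hrd
  -- conclude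
  have hG0 : Tendsto (fun r : ℝ => ψinv (r ^ (-q)) * f (ψinv (r ^ (-q))))
      (nhdsWithin 0 (Ioi 0)) (nhds 0) := hG.comp hutop
  have hc : ContinuousAt (fun x : ℝ => x ^ ((q-1)/q)) 0 :=
    Real.continuousAt_rpow_const 0 _ (Or.inr (by positivity))
  have hpow : Tendsto (fun r : ℝ => (ψinv (r ^ (-q)) * f (ψinv (r ^ (-q)))) ^ ((q-1)/q))
      (nhdsWithin 0 (Ioi 0)) (nhds 0) := by
    have := (hc.tendsto).comp hG0
    rw [Real.zero_rpow (by positivity)] at this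
    exact this
  apply Tendsto.congr' _ hpow
  filter_upwards [self_mem_nhdsWithin, hutop.eventually_ge_atTop b] with r hr hub
  have hr0 : (0:ℝ) < r := hr
  set u : ℝ := ψinv (r ^ (-q)) with hu'
  have hupos : 0 < u := lt_of_lt_of_le hbpos hub
  have hrq0 : (0:ℝ) ≤ r ^ (-q) := Real.rpow_nonneg hr0.le _
  have hψu : ψ u = r ^ (-q) := (hinv _ hrq0).2.2
  have hdivu : u / ψ u = u * r ^ q := by
    rw [hψu, Real.rpow_neg hr0.le, div_eq_mul_inv, inv_inv]
  have hrqpos : (0:ℝ) < r ^ q := Real.rpow_pos_of_pos hr0 _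
  have key : u * f u = (r * u) ^ (q * p) := by
    have h1 : f u = (u * r ^ q) ^ p := by
      show (u / ψ u) ^ p = _
      rw [hdivu]
    rw [h1, Real.mul_rpow hupos.le hrqpos.le, ← Real.rpow_mul hr0.le,
      Real.mul_rpow hr0.le hupos.le]
    have h2 : u ^ (q * p) = u * u ^ p := by
      have hqp : q * p = 1 + p := by
        rw [hp]; field_simp; ring
      rw [hqp, Real.rpow_add hupos, Real.rpow_one]
    rw [h2]; ring
  rw [key, ← Real.rpow_mul (by positivity : (0:ℝ) ≤ r * u)]
  have hone : q * p * ((q-1)/q) = 1 := by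
    rw [hp]; field_simp
  rw [hone, Real.rpow_one]
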